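/- Suppose φ̄ : (Fin n → ℝ) → ℝ is continuously differentiable and satisfies the steady-state HJB equation with state cost m (continuous), i.e. for all x: ∇φ̄(x) ⬝ᵥ f(x) − (1/4)·((g x)ᵀ.mulVec (∇φ̄ x)) ⬝ᵥ (R⁻¹.mulVec ((g x)ᵀ.mulVec (∇φ̄ x))) + m(x) = 0. Let u : ℝ → (Fin p → ℝ) be continuous, let g be continuous, and let x : ℝ → (Fin n → ℝ) be continuously differentiable with x'(t) = f(x(t)) + (g (x t)).mulVec (u t) for all t. Then for every T ≥ 0, the finite-horizon cost decomposes as ∫₀ᵀ (‖u(t)‖²_R + m(x(t))) dt = ∫₀ᵀ ‖u(t) + (1/2)·R⁻¹.mulVec ((g (x t))ᵀ.mulVec (∇φ̄ (x t)))‖²_R dt + φ̄(x(0)) − φ̄(x(T)). -/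

import Mathlib

open Matrix

/-- Euclidean gradient of a scalar function on `Fin n → ℝ`:
the vector of partial derivatives. -/
noncomputable def grad {n : ℕ} (φ : (Fin n → ℝ) → ℝ) (x : Fin n → ℝ) : Fin n → ℝ :=
  fun i => fderiv ℝ φ x (Pi.single i 1)

/-- `R`-weighted squared norm `‖u‖²_R = u ⬝ᵥ R.mulVec u`. -/
def sqR {p : ℕ} (R : Matrix (Fin p) (Fin p) ℝ) (u : Fin p → ℝ) : ℝ :=
  u ⬝ᵥ R.mulVec u

theorem stmt_4 {n p : ℕ}
    (f : (Fin n → ℝ) → (Fin n → ℝ))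
    (g : (Fin n → ℝ) → Matrix (Fin n) (Fin p) ℝ)
    (hg : Continuous g)
    (R : Matrix (Fin p) (Fin p) ℝ)
    (hRsymm : R.IsSymm) (hRpd : R.PosDef)
    (m : (Fin n → ℝ) → ℝ) (hm : Continuous m)
    (φb : (Fin n → ℝ) → ℝ)
    (hφ : ContDiff ℝ 1 φb)
    (hHJB : ∀ x, grad φb x ⬝ᵥ f x
        - (1/4) * ((g x)ᵀ.mulVec (grad φb x) ⬝ᵥ R⁻¹.mulVec ((g x)ᵀ.mulVec (grad φb x)))
        + m x = 0)
    (u : ℝ → (Fin p → ℝ)) (hu : Continuous u)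
    (x : ℝ → (Fin n → ℝ)) (hxC1 : ContDiff ℝ 1 x)
    (hx : ∀ t, HasDerivAt x (f (x t) + (g (x t)).mulVec (u t)) t) :
    ∀ T : ℝ, 0 ≤ T →
      (∫ t in (0:ℝ)..T, (sqR R (u t) + m (x t)))
        = (∫ t in (0:ℝ)..T,
            sqR R (u t + (1/2 : ℝ) • R⁻¹.mulVec ((g (x t))ᵀ.mulVec (grad φb (x t)))))
          + φb (x 0) - φb (x T) := by
  intro T hT
  have hdet : IsUnit R.det := isUnit_iff_ne_zero.mpr hRpd.det_pos.ne'
  have hRRinv : ∀ w : Fin p → ℝ, R.mulVec (R⁻¹.mulVec w) = w := by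
    intro w
    rw [Matrix.mulVec_mulVec, Matrix.mul_nonsing_inv R hdet, Matrix.one_mulVec]
  -- fderiv applied equals gradient dot product
  have hL : ∀ (y : Fin n → ℝ) (w : Fin n → ℝ),
      fderiv ℝ φb y w = grad φb y ⬝ᵥ w := by
    intro y w
    have hw : w = ∑ i, w i • (Pi.single i 1 : Fin n → ℝ) := by
      ext j
      simp [Pi.single_apply, Finset.sum_apply, mul_ite]
    conv_lhs => rw [hw]
    rw [map_sum]
    simp only [_root_.map_smul, smul_eq_mul]
    rw [dotProduct]
    exact Finset.sum_congr rfl fun i _ => by rw [grad, mul_comm]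
  -- symmetric bilinear form
  have hsymm : ∀ a b : Fin p → ℝ, b ⬝ᵥ R.mulVec a = a ⬝ᵥ R.mulVec b := by
    intro a b
    rw [Matrix.dotProduct_mulVec, ← Matrix.mulVec_transpose, hRsymm.eq, dotProduct_comm]
  -- abbreviation
  set v : ℝ → Fin p → ℝ := fun t => (g (x t))ᵀ.mulVec (grad φb (x t)) with hv
  -- derivative of φb ∘ x
  have hh : ∀ t, HasDerivAt (fun s => φb (x s))
      (grad φb (x t) ⬝ᵥ f (x t) + u t ⬝ᵥ v t) t := by
    intro t
    have h1 := ((hφ.differentiable one_ne_zero) (x t)).hasFDerivAt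
    have h2 := h1.comp_hasDerivAt t (hx t)
    have h3 : fderiv ℝ φb (x t) (f (x t) + (g (x t)).mulVec (u t))
        = grad φb (x t) ⬝ᵥ f (x t) + u t ⬝ᵥ v t := by
      rw [hL, dotProduct_add]
      congr 1
      rw [Matrix.dotProduct_mulVec, ← Matrix.mulVec_transpose, dotProduct_comm]
    rw [← h3]
    exact h2
  -- continuity facts
  have hxc : Continuous x := hxC1.continuous
  have hgradc : Continuous (grad φb) := by
    apply continuous_pi
    intro i
    exact (hφ.continuous_fderiv one_ne_zero).clm_apply continuous_const
  have hvc : Continuous v := by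
    exact Continuous.matrix_mulVec ((hg.comp hxc).matrix_transpose) (hgradc.comp hxc)
  have hsq : ∀ (w : ℝ → Fin p → ℝ), Continuous w → Continuous fun t => sqR R (w t) := by
    intro w hw
    exact (hw.dotProduct (Continuous.matrix_mulVec continuous_const hw))
  -- pointwise identity
  have key : ∀ t, sqR R (u t + (1/2 : ℝ) • R⁻¹.mulVec (v t))
      = (sqR R (u t) + m (x t)) + (grad φb (x t) ⬝ᵥ f (x t) + u t ⬝ᵥ v t) := by
    intro t
    have hHJB' : grad φb (x t) ⬝ᵥ f (x t)
        = (1/4) * (v t ⬝ᵥ R⁻¹.mulVec (v t)) - m (x t) := by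
      have := hHJB (x t)
      simp only [hv]
      linarith [hHJB (x t)]
    set a := u t
    set b := (1/2 : ℝ) • R⁻¹.mulVec (v t) with hb
    have expand : sqR R (a + b) = a ⬝ᵥ R.mulVec a + 2 * (a ⬝ᵥ R.mulVec b) + b ⬝ᵥ R.mulVec b := by
      rw [sqR, Matrix.mulVec_add, dotProduct_add, add_dotProduct, add_dotProduct,
        hsymm a b]
      ring
    have hab : a ⬝ᵥ R.mulVec b = (1/2) * (a ⬝ᵥ v t) := by
      rw [hb, Matrix.mulVec_smul, hRRinv, dotProduct_smul, smul_eq_mul]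
    have hbb : b ⬝ᵥ R.mulVec b = (1/4) * (v t ⬝ᵥ R⁻¹.mulVec (v t)) := by
      rw [hb, Matrix.mulVec_smul, hRRinv, dotProduct_smul, smul_dotProduct,
        smul_eq_mul, smul_eq_mul, dotProduct_comm]
      ring
    have hav : a ⬝ᵥ v t = u t ⬝ᵥ v t := rfl
    rw [expand, hab, hbb, hHJB']
    rw [sqR]
    ring
  -- integrability
  have hI1 : IntervalIntegrable (fun t => sqR R (u t) + m (x t)) MeasureTheory.volume 0 T :=
    ((hsq u hu).add (hm.comp hxc)).intervalIntegrable 0 T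
  have hder : Continuous (fun t => grad φb (x t) ⬝ᵥ f (x t) + u t ⬝ᵥ v t) := by
    have hfx : Continuous fun t => f (x t) := by
      have : ∀ t, f (x t) = (deriv x t) - (g (x t)).mulVec (u t) := by
        intro t
        rw [(hx t).deriv]
        abel
      rw [funext this]
      have hderiv : Continuous (deriv x) := hxC1.continuous_deriv le_rfl
      exact hderiv.sub (Continuous.matrix_mulVec (hg.comp hxc) hu)
    exact ((hgradc.comp hxc).dotProduct hfx).add (hu.dotProduct hvc)
  have hI2 : IntervalIntegrable (fun t => grad φb (x t) ⬝ᵥ f (x t) + u t ⬝ᵥ v t)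
      MeasureTheory.volume 0 T := hder.intervalIntegrable 0 T
  -- FTC
  have hFTC : ∫ t in (0:ℝ)..T, (grad φb (x t) ⬝ᵥ f (x t) + u t ⬝ᵥ v t)
      = φb (x T) - φb (x 0) :=
    intervalIntegral.integral_eq_sub_of_hasDerivAt (fun t _ => hh t) hI2
  calc (∫ t in (0:ℝ)..T, (sqR R (u t) + m (x t)))
      = (∫ t in (0:ℝ)..T, ((sqR R (u t) + m (x t))
          + (grad φb (x t) ⬝ᵥ f (x t) + u t ⬝ᵥ v t)))
        - (φb (x T) - φb (x 0)) := by
        rw [intervalIntegral.integral_add hI1 hI2, hFTC]; ring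
    _ = (∫ t in (0:ℝ)..T,
            sqR R (u t + (1/2 : ℝ) • R⁻¹.mulVec ((g (x t))ᵀ.mulVec (grad φb (x t)))))
          + φb (x 0) - φb (x T) := by
        rw [intervalIntegral.integral_congr (g := fun t =>
          sqR R (u t + (1/2 : ℝ) • R⁻¹.mulVec (v t))) (fun t _ => (key t).symm)]
        ring
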